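/- Let m ≥ 1 be a natural number and let s be a real number with s > -m. Define Q_k = (2m+s)·Γ(m+s+2+s/m)·Γ(k+s) / (m·Γ(m+s)·Γ(k+s+3+s/m)) for k ≥ m. Then k^{(3m+s)/m} · Q_k tends, as k → ∞, to the positive constant (2m+s)·Γ(m+s+2+s/m) / (m·Γ(m+s)); that is, the final vertex degree distribution of the L-graph with parameters (m,s) is asymptotically power-law, Q_k ~ c·k^{-α} with exponent α = (3m+s)/m = 3 + s/m. -/

import Mathlib

open Filter Real Topology

-- log-based Wendel bounds
lemma wendel_upper {a x : ℝ} (ha : 0 ≤ a) (ha1 : a ≤ 1) (hx : 0 < x) :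
    Real.Gamma (x + a) ≤ Real.Gamma x * x ^ a := by
  have hx1 : (0:ℝ) < x + 1 := by linarith
  have hxa : (0:ℝ) < x + a := by linarith
  have h := Real.convexOn_log_Gamma.2 (Set.mem_Ioi.2 hx) (Set.mem_Ioi.2 hx1)
    (by linarith : (0:ℝ) ≤ 1 - a) ha (by ring)
  simp only [smul_eq_mul, Function.comp_apply] at h
  rw [(by ring : (1 - a) * x + a * (x + 1) = x + a)] at h
  have hG : 0 < Real.Gamma x := Real.Gamma_pos_of_pos hx
  have hGa : 0 < Real.Gamma (x + a) := Real.Gamma_pos_of_pos hxa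
  have hG1 : Real.Gamma (x + 1) = x * Real.Gamma x := Real.Gamma_add_one hx.ne'
  rw [← Real.log_le_log_iff hGa (by positivity)]
  rw [Real.log_mul hG.ne' (Real.rpow_pos_of_pos hx a).ne', Real.log_rpow hx]
  rw [hG1, Real.log_mul hx.ne' hG.ne'] at h
  linarith

lemma wendel_lower {a x : ℝ} (ha : 0 ≤ a) (ha1 : a ≤ 1) (hx : 0 < x) :
    (x / (x + a)) ^ (1 - a) ≤ Real.Gamma (x + a) / (Real.Gamma x * x ^ a) := by
  have hxa : (0:ℝ) < x + a := by linarith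
  have hxa1 : (0:ℝ) < x + a + 1 := by linarith
  have h := Real.convexOn_log_Gamma.2 (Set.mem_Ioi.2 hxa) (Set.mem_Ioi.2 hxa1)
    ha (by linarith : (0:ℝ) ≤ 1 - a) (by ring)
  simp only [smul_eq_mul, Function.comp_apply] at h
  rw [(by ring : a * (x + a) + (1 - a) * (x + a + 1) = x + 1)] at h
  have hG : 0 < Real.Gamma x := Real.Gamma_pos_of_pos hx
  have hGa : 0 < Real.Gamma (x + a) := Real.Gamma_pos_of_pos hxa
  have hG1 : Real.Gamma (x + 1) = x * Real.Gamma x := Real.Gamma_add_one hx.ne'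
  have hGa1 : Real.Gamma (x + a + 1) = (x + a) * Real.Gamma (x + a) :=
    Real.Gamma_add_one hxa.ne'
  rw [← Real.log_le_log_iff (Real.rpow_pos_of_pos (by positivity) _)
    (div_pos hGa (by positivity))]
  rw [Real.log_rpow (by positivity), Real.log_div hGa.ne' (by positivity),
    Real.log_mul hG.ne' (Real.rpow_pos_of_pos hx a).ne', Real.log_rpow hx,
    Real.log_div hx.ne' hxa.ne']
  rw [hG1, hGa1, Real.log_mul hx.ne' hG.ne', Real.log_mul hxa.ne' hGa.ne'] at h
  linarith

lemma tendsto_add_const_div (c : ℝ) :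
    Tendsto (fun x : ℝ => (x + c) / x) atTop (𝓝 1) := by
  have h0 : Tendsto (fun x : ℝ => c / x) atTop (𝓝 0) :=
    Tendsto.div_atTop tendsto_const_nhds tendsto_id
  have h : Tendsto (fun x : ℝ => 1 + c / x) atTop (𝓝 1) := by
    simpa using tendsto_const_nhds.add h0
  refine h.congr' ?_
  filter_upwards [eventually_gt_atTop (0:ℝ)] with x hx
  field_simp

lemma tendsto_div_add_const (a : ℝ) :
    Tendsto (fun x : ℝ => x / (x + a)) atTop (𝓝 1) := by
  have h := (tendsto_add_const_div (-a)).comp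
    (tendsto_atTop_add_const_right atTop a tendsto_id)
  refine h.congr fun x => ?_
  simp [Function.comp]

lemma wendel (a : ℝ) (ha : 0 ≤ a) (ha1 : a ≤ 1) :
    Tendsto (fun x : ℝ => Real.Gamma (x + a) / (Real.Gamma x * x ^ a)) atTop (𝓝 1) := by
  have hlb : Tendsto (fun x : ℝ => (x / (x + a)) ^ (1 - a)) atTop (𝓝 1) := by
    have := (tendsto_div_add_const a).rpow_const (p := 1 - a) (Or.inl one_ne_zero)
    simpa using this
  refine tendsto_of_tendsto_of_tendsto_of_le_of_le' hlb tendsto_const_nhds ?_ ?_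
  · filter_upwards [eventually_gt_atTop (0:ℝ)] with x hx
    exact wendel_lower ha ha1 hx
  · filter_upwards [eventually_gt_atTop (0:ℝ)] with x hx
    have h := wendel_upper ha ha1 hx
    rw [div_le_one (by positivity)]
    exact h

lemma gamma_ratio (a : ℝ) (ha : 0 ≤ a) :
    Tendsto (fun x : ℝ => Real.Gamma (x + a) / (Real.Gamma x * x ^ a)) atTop (𝓝 1) := by
  obtain ⟨n, hn⟩ := exists_nat_ge a
  induction n generalizing a with
  | zero =>
    have h0 : a = 0 := le_antisymm (by exact_mod_cast hn) ha
    subst h0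
    exact wendel 0 le_rfl zero_le_one
  | succ n ih =>
    by_cases hle : a ≤ n
    · exact ih a ha hle
    · push_neg at hle
      rcases le_or_gt a 1 with h1 | h1
      · exact wendel a ha h1
      · have ha' : 0 ≤ a - 1 := by linarith
        have hn' : a - 1 ≤ n := by
          have : a ≤ (n:ℝ) + 1 := by exact_mod_cast hn
          linarith
        have h := ih (a - 1) ha' hn'
        have hmul : Tendsto (fun x : ℝ => ((x + (a - 1)) / x) *
            (Real.Gamma (x + (a - 1)) / (Real.Gamma x * x ^ (a - 1)))) atTop (𝓝 1) := by
          have h2 := tendsto_add_const_div (a - 1)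
          simpa using h2.mul h
        refine hmul.congr' ?_
        filter_upwards [eventually_gt_atTop (max 0 (1 - a))] with x hx
        have hx0 : 0 < x := (le_max_left _ _).trans_lt hx
        have hxa : 0 < x + a - 1 := by
          have : 1 - a < x := (le_max_right _ _).trans_lt hx
          linarith
        have hG : Real.Gamma (x + a) = (x + a - 1) * Real.Gamma (x + (a - 1)) := by
          rw [(by ring : x + a = (x + (a - 1)) + 1), Real.Gamma_add_one (by linarith)]
          ring_nf
        have hpow : x ^ a = x ^ (a - 1) * x := by
          calc x ^ a = x ^ (a - 1 + 1) := by norm_num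
            _ = x ^ (a - 1) * x ^ (1:ℝ) := Real.rpow_add hx0 _ _
            _ = x ^ (a - 1) * x := by rw [Real.rpow_one]
        rw [hG, hpow]
        have h1 : Real.Gamma x ≠ 0 := (Real.Gamma_pos_of_pos hx0).ne'
        have h2 : x ^ (a-1) ≠ 0 := (Real.rpow_pos_of_pos hx0 _).ne'
        field_simp
        ring

/-- The closed-form L-graph VDD is asymptotically power-law with exponent
`α = (3m+s)/m`: `k^α · Q_k` tends to the positive constant
`(2m+s)·Γ(m+s+2+s/m)/(m·Γ(m+s))`. -/
theorem L_vdd_power_law_asymptotics (m : ℕ) (hm : 1 ≤ m) (s : ℝ) (hs : -(m : ℝ) < s) :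
    Tendsto
      (fun k : ℕ =>
        (k : ℝ) ^ ((3 * m + s) / m) *
          ((2 * m + s) * Real.Gamma (m + s + 2 + s / m) * Real.Gamma (k + s) /
            (m * Real.Gamma (m + s) * Real.Gamma (k + s + 3 + s / m))))
      atTop
      (nhds ((2 * m + s) * Real.Gamma (m + s + 2 + s / m) / (m * Real.Gamma (m + s)))) ∧
    0 < (2 * m + s) * Real.Gamma (m + s + 2 + s / m) / (m * Real.Gamma (m + s)) := by
  have hm0 : (0:ℝ) < m := by exact_mod_cast hm
  have hms : (0:ℝ) < (m:ℝ) + s := by linarith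
  have hsm : (-1:ℝ) < s / m := (lt_div_iff₀ hm0).mpr (by linarith)
  set a : ℝ := 3 + s / m with ha_def
  have ha0 : (0:ℝ) ≤ a := by simp only [ha_def]; linarith
  have hexp : (3 * (m:ℝ) + s) / m = a := by
    rw [ha_def]; field_simp
  have h2ms : (0:ℝ) < 2 * m + s := by linarith
  have hG1 : 0 < Real.Gamma ((m:ℝ) + s + 2 + s / m) := Real.Gamma_pos_of_pos (by linarith)
  have hG2 : 0 < Real.Gamma ((m:ℝ) + s) := Real.Gamma_pos_of_pos hms
  have hpos : 0 < (2 * (m:ℝ) + s) * Real.Gamma ((m:ℝ) + s + 2 + s / m) /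
      ((m:ℝ) * Real.Gamma ((m:ℝ) + s)) := by positivity
  refine ⟨?_, hpos⟩
  set C : ℝ := (2 * (m:ℝ) + s) * Real.Gamma ((m:ℝ) + s + 2 + s / m) /
      ((m:ℝ) * Real.Gamma ((m:ℝ) + s)) with hC_def
  have hcomp : Tendsto (fun k : ℕ => (k:ℝ) + s) atTop atTop :=
    tendsto_atTop_add_const_right _ s tendsto_natCast_atTop_atTop
  have h1 : Tendsto (fun k : ℕ =>
      Real.Gamma ((k:ℝ) + s + a) / (Real.Gamma ((k:ℝ) + s) * ((k:ℝ) + s) ^ a))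
      atTop (𝓝 1) := (gamma_ratio a ha0).comp hcomp
  have h2 : Tendsto (fun k : ℕ => ((k:ℝ) / ((k:ℝ) + s)) ^ a) atTop (𝓝 1) := by
    have := ((tendsto_div_add_const s).comp tendsto_natCast_atTop_atTop).rpow_const
      (p := a) (Or.inl one_ne_zero)
    simpa using this
  have hlim : Tendsto (fun k : ℕ => C * (((k:ℝ) / ((k:ℝ) + s)) ^ a /
      (Real.Gamma ((k:ℝ) + s + a) / (Real.Gamma ((k:ℝ) + s) * ((k:ℝ) + s) ^ a))))
      atTop (𝓝 C) := by
    have := tendsto_const_nhds (x := C) (f := atTop (α := ℕ)) |>.mul (h2.div h1 one_ne_zero)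
    simpa using this
  refine hlim.congr' ?_
  filter_upwards [eventually_gt_atTop 0, hcomp.eventually (eventually_gt_atTop (0:ℝ))]
    with k hk hks
  have hk0 : (0:ℝ) < k := by exact_mod_cast hk
  have hGk : 0 < Real.Gamma ((k:ℝ) + s) := Real.Gamma_pos_of_pos hks
  have hGka : 0 < Real.Gamma ((k:ℝ) + s + a) := Real.Gamma_pos_of_pos (by linarith)
  have hksa : (0:ℝ) < ((k:ℝ) + s) ^ a := Real.rpow_pos_of_pos hks a
  have heq : (k:ℝ) + s + 3 + s / m = (k:ℝ) + s + a := by rw [ha_def]; ring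
  rw [heq, hexp, Real.div_rpow hk0.le hks.le, hC_def]
  field_simp
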